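/- For every integer l ≥ 4 and all integers m, n with 2 ≤ m < n, every common divisor of G_m^{(l)} and G_n^{(l)} in the polynomial ring ℚ[y₁,…,y_l] is a unit; that is, the polynomials (y₁+⋯+y_l)^m − y₁^m − ⋯ − y_l^m and (y₁+⋯+y_l)^n − y₁^n − ⋯ − y_l^n have no nonconstant common factor. -/

import Mathlib

open MvPolynomial

private lemma degreeOf_zero_le_of_dvd {n : ℕ} (p q : MvPolynomial (Fin (n + 1)) ℚ)
    (h : p ∣ q) (hq : q ≠ 0) : degreeOf 0 p ≤ degreeOf 0 q := by
  obtain ⟨e, rfl⟩ := h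
  have hp : p ≠ 0 := fun h0 => hq (by simp [h0])
  have he : e ≠ 0 := fun h0 => hq (by simp [h0])
  have hfp : finSuccEquiv ℚ n p ≠ 0 :=
    (map_ne_zero_iff _ (finSuccEquiv ℚ n).injective).mpr hp
  have hfe : finSuccEquiv ℚ n e ≠ 0 :=
    (map_ne_zero_iff _ (finSuccEquiv ℚ n).injective).mpr he
  have hmul : (finSuccEquiv ℚ n) (p * e) = finSuccEquiv ℚ n p * finSuccEquiv ℚ n e :=
    map_mul _ _ _
  have hdeg := Polynomial.natDegree_mul hfp hfe
  rw [← natDegree_finSuccEquiv p, ← natDegree_finSuccEquiv (p * e), hmul, hdeg]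
  exact Nat.le_add_right _ _

private lemma degreeOf_le_of_dvd {n : ℕ} (k : Fin (n + 1)) (p q : MvPolynomial (Fin (n + 1)) ℚ)
    (h : p ∣ q) (hq : q ≠ 0) : degreeOf k p ≤ degreeOf k q := by
  set e := Equiv.swap k (0 : Fin (n + 1)) with he
  have hdvd : rename e p ∣ rename e q := by
    obtain ⟨c, rfl⟩ := h
    exact ⟨rename e c, by rw [map_mul]⟩
  have hq' : rename (⇑e) q ≠ 0 :=
    fun h0 => hq ((map_eq_zero_iff _ (rename_injective _ e.injective)).mp h0)
  have h0 := degreeOf_zero_le_of_dvd _ _ hdvd hq'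
  have hek : e k = 0 := Equiv.swap_apply_left _ _
  rwa [← hek, degreeOf_rename_of_injective e.injective k,
    degreeOf_rename_of_injective e.injective k] at h0

set_option maxHeartbeats 1000000 in
theorem G_coprime_of_four_le (l : ℕ) (hl : 4 ≤ l) (m n : ℕ) (hm : 2 ≤ m) (hmn : m < n)
    (d : MvPolynomial (Fin l) ℚ)
    (hdm : d ∣ ((∑ i : Fin l, X i) ^ m - ∑ i : Fin l, (X i) ^ m))
    (hdn : d ∣ ((∑ i : Fin l, X i) ^ n - ∑ i : Fin l, (X i) ^ n)) :
    IsUnit d := by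
  by_contra hd
  obtain ⟨l', rfl⟩ : ∃ l', l = l' + 1 := ⟨l - 1, by omega⟩
  set S : MvPolynomial (Fin (l' + 1)) ℚ := ∑ i : Fin (l' + 1), X i with hS
  set Gm : MvPolynomial (Fin (l' + 1)) ℚ := S ^ m - ∑ i : Fin (l' + 1), (X i) ^ m with hGm
  set Gn : MvPolynomial (Fin (l' + 1)) ℚ := S ^ n - ∑ i : Fin (l' + 1), (X i) ^ n with hGn
  -- Gn ≠ 0
  have hcard : (Finset.univ : Finset (Fin (l' + 1))).card = l' + 1 := by simp
  have hGn0 : Gn ≠ 0 := by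
    intro h0
    have h1 : eval (fun _ : Fin (l' + 1) => (1 : ℚ)) Gn = 0 := by rw [h0]; simp
    rw [hGn, hS] at h1
    simp only [map_sub, map_pow, map_sum, eval_X, one_pow, Finset.sum_const, hcard,
      nsmul_eq_mul, mul_one] at h1
    have h2 : ((l' + 1 : ℕ) : ℚ) ^ n = ((l' + 1 : ℕ) : ℚ) := by
      push_cast at h1 ⊢
      linarith
    rw [← Nat.cast_pow, Nat.cast_inj] at h2
    have h3 : (l' + 1) ^ 1 < (l' + 1) ^ n := Nat.pow_lt_pow_right (by omega) (by omega)
    simp at h3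
    omega
  have hd0 : d ≠ 0 := by
    rintro rfl
    exact hGn0 (zero_dvd_iff.mp hdn)
  -- find a variable appearing in d
  have hex : ∃ k, degreeOf k d ≠ 0 := by
    by_contra hall
    push_neg at hall
    apply hd
    have hdc : d = C (coeff 0 d) := by
      ext s
      rcases eq_or_ne s 0 with rfl | hs
      · simp
      · rw [coeff_C, if_neg (Ne.symm hs)]
        by_contra hcoeff
        obtain ⟨k, hk⟩ : ∃ k, s k ≠ 0 := by
          by_contra hzero
          push_neg at hzero
          exact hs (Finsupp.ext hzero)
        have hle : s k ≤ degreeOf k d := by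
          rw [degreeOf_eq_sup]
          exact Finset.le_sup (f := fun m => m k) (mem_support_iff.mpr hcoeff)
        rw [hall k] at hle
        omega
    have hc0 : coeff 0 d ≠ 0 := by
      intro h0
      rw [h0, map_zero] at hdc
      exact hd0 hdc
    rw [hdc]
    exact IsUnit.of_mul_eq_one (C (coeff 0 d)⁻¹)
      (by rw [← C_mul, mul_inv_cancel₀ hc0, C_1])
  obtain ⟨k, hk⟩ := hex
  -- pick three distinct indices different from k
  obtain ⟨a₀, a₁, a₂, ha⟩ : ∃ a₀ a₁ a₂ : ℕ,
      a₀ < l' + 1 ∧ a₁ < l' + 1 ∧ a₂ < l' + 1 ∧ a₀ ≠ a₁ ∧ a₀ ≠ a₂ ∧ a₁ ≠ a₂ ∧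
      a₀ ≠ (k : ℕ) ∧ a₁ ≠ (k : ℕ) ∧ a₂ ≠ (k : ℕ) := by
    have hkl := k.isLt
    refine ⟨if (k : ℕ) = 0 then 1 else 0, if (k : ℕ) ≤ 1 then 2 else 1,
      if (k : ℕ) ≤ 2 then 3 else 2, ?_⟩
    split_ifs <;> omega
  obtain ⟨h0l, h1l, h2l, h01, h02, h12, hk0, hk1, hk2⟩ := ha
  set i₀ : Fin (l' + 1) := ⟨a₀, h0l⟩
  set i₁ : Fin (l' + 1) := ⟨a₁, h1l⟩
  set i₂ : Fin (l' + 1) := ⟨a₂, h2l⟩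
  -- partial derivatives
  have hpS : ∀ i : Fin (l' + 1), pderiv i S = 1 := by
    intro i
    rw [hS, map_sum]
    rw [Finset.sum_eq_single i (fun j _ hj => pderiv_X_of_ne hj) (by simp)]
    exact pderiv_X_self i
  set u : Fin (l' + 1) → MvPolynomial (Fin (l' + 1)) ℚ := fun i => S ^ (m - 1) - X i ^ (m - 1) with hu
  set v : Fin (l' + 1) → MvPolynomial (Fin (l' + 1)) ℚ := fun i => S ^ (n - 1) - X i ^ (n - 1) with hv
  have hsum : ∀ (N : ℕ) (i : Fin (l' + 1)),
      pderiv i (∑ j : Fin (l' + 1), (X j : MvPolynomial (Fin (l' + 1)) ℚ) ^ N) = (N : MvPolynomial (Fin (l' + 1)) ℚ) * X i ^ (N - 1) := by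
    intro N i
    rw [map_sum]
    rw [Finset.sum_eq_single i (fun j _ hj => by rw [pderiv_pow, pderiv_X_of_ne hj, mul_zero])
      (by simp)]
    rw [pderiv_pow, pderiv_X_self, mul_one]
  have hAm : ∀ i : Fin (l' + 1), pderiv i Gm = (m : MvPolynomial (Fin (l' + 1)) ℚ) * u i := by
    intro i
    rw [hGm, map_sub, pderiv_pow, hpS, hsum, hu]
    ring
  have hAn : ∀ i : Fin (l' + 1), pderiv i Gn = (n : MvPolynomial (Fin (l' + 1)) ℚ) * v i := by
    intro i
    rw [hGn, map_sub, pderiv_pow, hpS, hsum, hv]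
    ring
  -- the minors are divisible by d
  obtain ⟨E, hE⟩ := hdm
  obtain ⟨F, hF⟩ := hdn
  have hminor : ∀ i j : Fin (l' + 1), d ∣ (u i * v j - u j * v i) := by
    intro i j
    have key : d ∣ pderiv i Gm * pderiv j Gn - pderiv j Gm * pderiv i Gn := by
      rw [hE, hF]
      refine ⟨pderiv i d * E * pderiv j F + pderiv i E * pderiv j d * F
        + d * pderiv i E * pderiv j F - pderiv j d * E * pderiv i F
        - pderiv j E * pderiv i d * F - d * pderiv j E * pderiv i F, ?_⟩
      rw [pderiv_mul, pderiv_mul, pderiv_mul, pderiv_mul]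
      ring
    rw [hAm, hAm, hAn, hAn] at key
    have hc : (m : MvPolynomial (Fin (l' + 1)) ℚ) * u i * ((n : MvPolynomial (Fin (l' + 1)) ℚ) * v j) - (m : MvPolynomial (Fin (l' + 1)) ℚ) * u j * ((n : MvPolynomial (Fin (l' + 1)) ℚ) * v i)
        = C ((m : ℚ) * n) * (u i * v j - u j * v i) := by
      have : (C ((m : ℚ) * n) : MvPolynomial (Fin (l' + 1)) ℚ) = (m : MvPolynomial (Fin (l' + 1)) ℚ) * (n : MvPolynomial (Fin (l' + 1)) ℚ) := by
        rw [← Nat.cast_mul, map_natCast (C : ℚ →+* MvPolynomial (Fin (l' + 1)) ℚ) (m * n),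
          Nat.cast_mul]
      rw [this]
      ring
    rw [hc] at key
    have hmn0 : ((m : ℚ) * n) ≠ 0 := by
      have : (0 : ℚ) < (m : ℚ) * n := by
        have h1 : (0 : ℚ) < m := by exact_mod_cast Nat.lt_of_lt_of_le Nat.zero_lt_two hm
        have h2 : (0 : ℚ) < n := by exact_mod_cast Nat.lt_of_lt_of_le Nat.zero_lt_two (by omega)
        positivity
      exact ne_of_gt this
    obtain ⟨t, ht⟩ := key
    refine ⟨C ((m : ℚ) * n)⁻¹ * t, ?_⟩
    have : u i * v j - u j * v i
        = C ((m : ℚ) * n)⁻¹ * (C ((m : ℚ) * n) * (u i * v j - u j * v i)) := by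
      rw [← mul_assoc, ← C_mul, inv_mul_cancel₀ hmn0, C_1, one_mul]
    rw [this, ht]
    ring
  -- the combination polynomial
  set Q : MvPolynomial (Fin (l' + 1)) ℚ := (X i₀ ^ (m - 1) - X i₁ ^ (m - 1)) * (X i₀ ^ (n - 1) - X i₂ ^ (n - 1))
      - (X i₀ ^ (m - 1) - X i₂ ^ (m - 1)) * (X i₀ ^ (n - 1) - X i₁ ^ (n - 1)) with hQ
  have hdQ : d ∣ Q := by
    have hcomb : Q = (u i₂ * v i₀ - u i₀ * v i₂) + ((u i₀ * v i₁ - u i₁ * v i₀)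
        + (u i₁ * v i₂ - u i₂ * v i₁)) := by
      rw [hQ, hu, hv]
      ring
    rw [hcomb]
    exact dvd_add (hminor _ _) (dvd_add (hminor _ _) (hminor _ _))
  -- Q is nonzero
  have hne01 : i₀ ≠ i₁ := fun h => h01 (by simpa using congrArg Fin.val h)
  have hne02 : i₀ ≠ i₂ := fun h => h02 (by simpa using congrArg Fin.val h)
  have hne12 : i₁ ≠ i₂ := fun h => h12 (by simpa using congrArg Fin.val h)
  have hQ0 : Q ≠ 0 := by
    intro h0
    set g : Fin (l' + 1) → ℚ := fun t => if t = i₁ then 1 else if t = i₂ then 2 else 0 with hg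
    have hg0 : g i₀ = 0 := by rw [hg]; simp [hne01, hne02]
    have hg1 : g i₁ = 1 := by rw [hg]; simp
    have hg2 : g i₂ = 2 := by rw [hg]; simp [hne12.symm]
    have heval : eval g Q = 0 := by rw [h0]; simp
    rw [hQ] at heval
    simp only [map_sub, map_mul, map_pow, eval_X, hg0, hg1, hg2] at heval
    rw [zero_pow (by omega : m - 1 ≠ 0), zero_pow (by omega : n - 1 ≠ 0), one_pow, one_pow]
      at heval
    have hlt : (2 : ℚ) ^ (m - 1) < 2 ^ (n - 1) := by
      apply pow_lt_pow_right₀ (by norm_num) (by omega)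
    nlinarith [heval]
  -- Q does not involve variable k
  have hki0 : i₀ ≠ k := Fin.ne_of_val_ne hk0
  have hki1 : i₁ ≠ k := Fin.ne_of_val_ne hk1
  have hki2 : i₂ ≠ k := Fin.ne_of_val_ne hk2
  have hQvars : degreeOf k Q = 0 := by
    classical
    have hXpow : ∀ (i : Fin (l' + 1)) (a : ℕ), i ≠ k → k ∉ ((X i : MvPolynomial (Fin (l' + 1)) ℚ) ^ a).vars := by
      intro i a hi hmem
      have h1 : k ∈ (X i : MvPolynomial (Fin (l' + 1)) ℚ).vars := vars_pow _ _ hmem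
      rw [vars_X] at h1
      exact hi (Finset.mem_singleton.mp h1).symm
    have hstep : ∀ (i j : Fin (l' + 1)) (a : ℕ), i ≠ k → j ≠ k →
        k ∉ ((X i ^ a - X j ^ a : MvPolynomial (Fin (l' + 1)) ℚ)).vars := by
      intro i j a hi hj hmem
      rcases Finset.mem_union.mp (vars_sub_subset _ hmem) with h | h
      · exact hXpow i a hi h
      · exact hXpow j a hj h
    have hnotin : k ∉ Q.vars := by
      intro hmem
      rw [hQ] at hmem
      rcases Finset.mem_union.mp (vars_sub_subset _ hmem) with h | h <;>
        rcases Finset.mem_union.mp (vars_mul _ _ h) with h' | h'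
      · exact hstep i₀ i₁ (m - 1) hki0 hki1 h'
      · exact hstep i₀ i₂ (n - 1) hki0 hki2 h'
      · exact hstep i₀ i₂ (m - 1) hki0 hki2 h'
      · exact hstep i₀ i₁ (n - 1) hki0 hki1 h'
    rw [degreeOf_def]
    rw [vars_def] at hnotin
    exact Multiset.count_eq_zero_of_notMem (fun hmem => hnotin (Multiset.mem_toFinset.mpr hmem))
  -- contradiction
  have hfinal := degreeOf_le_of_dvd k d Q hdQ hQ0
  rw [hQvars] at hfinal
  omega
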